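/- Let $\mathcal{F}_n$ be a regular family all of whose members $E$ satisfy: for any $E' < F$ with $F \in \mathcal{F}_n$ nonempty and $k \in F \setminus E'$, there is a norm-one vector $e_k$ separating $2^{-n}\sum_{i \in E'} e_i^*$ and $2^{-n}\sum_{i \in F} e_i^*$ by $2^{-n}$. Then for every $n$, every ordinal $\mu < CB(\mathcal{F}_n)$ and every $E \in \mathcal{F}_n^{(\mu)}$, the functional $2^{-n}\sum_{i \in E} e_i^*$ belongs to $s_{2^{-n-1}}^\mu(B_{G^*})$; consequently $Sz(G) \geq \sup_n CB(\mathcal{F}_n) - 1$ in the sense that $Sz(G) \geq \omega^{\omega^\zeta n}$ for all $n$ when $CB(\mathcal{F}_n) = \omega^{\omega^\zeta n}+1$, hence $Sz(G) \geq \omega^{\omega^{\zeta+1}}$. -/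

import Mathlib

/-- The indicator of a finite set of naturals, as a point of the Cantor space `ℕ → Bool`. -/
def finsetInd (E : Finset ℕ) : ℕ → Bool := fun n => decide (n ∈ E)

/-- A family of finite subsets of `ℕ`, viewed as a subset of the Cantor space. -/
def famTop (F : Set (Finset ℕ)) : Set (ℕ → Bool) := finsetInd '' F

/-- A family is hereditary if it is closed under subsets. -/
def Hereditary (F : Set (Finset ℕ)) : Prop := ∀ E ∈ F, ∀ G ⊆ E, G ∈ F

/-- `G` is a spread of `E` if they have the same cardinality and the `i`-th element of `G`
(in increasing order) is at least the `i`-th element of `E`. -/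
def IsSpreadOf (G E : Finset ℕ) : Prop :=
  ∃ h : G.card = E.card, ∀ i : Fin E.card,
    ((E.orderIsoOfFin rfl) i).1 ≤ ((G.orderIsoOfFin h) i).1

/-- A family is spreading if it contains all spreads of its members. -/
def Spreading (F : Set (Finset ℕ)) : Prop := ∀ E ∈ F, ∀ G, IsSpreadOf G E → G ∈ F

/-- A family is regular if it is hereditary, spreading, and compact in the Cantor space. -/
def RegularFam (F : Set (Finset ℕ)) : Prop :=
  Hereditary F ∧ Spreading F ∧ IsCompact (famTop F)

/-- `E < F` for finite sets: every element of `E` is less than every element of `F`. -/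
def FinsetLT (E F : Finset ℕ) : Prop := ∀ a ∈ E, ∀ b ∈ F, a < b

/-- The bracket operation
`F[G] = {∅} ∪ {E₁ ∪ ⋯ ∪ Eₙ : ∅ ≠ Eᵢ ∈ G, E₁ < ⋯ < Eₙ, (min Eᵢ)ᵢ ∈ F}`. -/
def bracketFam (F G : Set (Finset ℕ)) : Set (Finset ℕ) :=
  {∅} ∪ { E | ∃ (n : ℕ) (_ : 0 < n) (Es : Fin n → Finset ℕ)
      (hne : ∀ i, (Es i).Nonempty),
      (∀ i, Es i ∈ G) ∧ (∀ i j : Fin n, i < j → FinsetLT (Es i) (Es j)) ∧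
      (Finset.univ.image fun i => (Es i).min' (hne i)) ∈ F ∧
      E = Finset.univ.biUnion Es }

/-- The Cantor–Bendixson derived family: those `E` whose indicator is an accumulation point
of the family in the Cantor space. -/
def derivFam (F : Set (Finset ℕ)) : Set (Finset ℕ) :=
  { E | finsetInd E ∈ derivedSet (famTop F) }

/-- Transfinite iteration of the Cantor–Bendixson derived set. -/
noncomputable def CBderiv (A : Set (ℕ → Bool)) (o : Ordinal) : Set (ℕ → Bool) :=
  Ordinal.limitRecOn o A (fun _ S => derivedSet S)
    (fun o _ ih => ⋂ b : { b : Ordinal // b < o }, ih b.1 b.2)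

/-- The Cantor–Bendixson index: the least ordinal `η` with `A⁽ᵉᵗᵃ⁾ = ∅`. -/
noncomputable def CBindex (A : Set (ℕ → Bool)) : Ordinal :=
  sInf { o | CBderiv A o = ∅ }

/-- The Cantor–Bendixson index of a family of finite subsets of `ℕ`. -/
noncomputable def CBfam (F : Set (Finset ℕ)) : Ordinal := CBindex (famTop F)

/-- The `o`-th Cantor–Bendixson derived family. -/
noncomputable def derivFamIter (F : Set (Finset ℕ)) (o : Ordinal) : Set (Finset ℕ) :=
  { E | finsetInd E ∈ CBderiv (famTop F) o }

open NormedSpace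

/-- One step of the `ε`-Szlenk derivation of a set `K ⊆ X*`: the points of `K` all of whose
weak* neighborhoods meet `K` in a set of norm-diameter at least `ε`. -/
noncomputable def szDeriv {X : Type*} [NormedAddCommGroup X] [NormedSpace ℝ X]
    (ε : ℝ) (K : Set (StrongDual ℝ X)) : Set (StrongDual ℝ X) :=
  { f | f ∈ K ∧ ∀ U : Set (WeakDual ℝ X), IsOpen U → StrongDual.toWeakDual f ∈ U →
      ε ≤ Metric.diam { g | g ∈ K ∧ StrongDual.toWeakDual g ∈ U } }

/-- The transfinite iteration `s_ε^o(K)` of the `ε`-Szlenk derivation. -/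
noncomputable def szIter {X : Type*} [NormedAddCommGroup X] [NormedSpace ℝ X]
    (ε : ℝ) (K : Set (StrongDual ℝ X)) (o : Ordinal) : Set (StrongDual ℝ X) :=
  Ordinal.limitRecOn o K (fun _ S => szDeriv ε S)
    (fun o _ ih => ⋂ b : { b : Ordinal // b < o }, ih b.1 b.2)

section Aux

lemma finsetInd_injective : Function.Injective finsetInd := by
  intro a b h
  ext k
  have := congrFun h k
  simpa [finsetInd] using this

lemma finsetInd_mem_famTop {F : Set (Finset ℕ)} {E : Finset ℕ} :
    finsetInd E ∈ famTop F ↔ E ∈ F := by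
  constructor
  · rintro ⟨E', hE', h⟩
    exact finsetInd_injective h ▸ hE'
  · exact fun h => ⟨E, h, rfl⟩

lemma CBderiv_zero (A : Set (ℕ → Bool)) : CBderiv A 0 = A :=
  Ordinal.limitRecOn_zero ..

lemma CBderiv_succ (A : Set (ℕ → Bool)) (o : Ordinal) :
    CBderiv A (Order.succ o) = derivedSet (CBderiv A o) :=
  Ordinal.limitRecOn_succ ..

lemma CBderiv_limit (A : Set (ℕ → Bool)) {o : Ordinal} (h : Order.IsSuccLimit o) :
    CBderiv A o = ⋂ b : { b : Ordinal // b < o }, CBderiv A b.1 :=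
  Ordinal.limitRecOn_limit _ _ _ _ h

lemma CBderiv_closed_subset {A : Set (ℕ → Bool)} (hA : IsClosed A) (o : Ordinal) :
    IsClosed (CBderiv A o) ∧ CBderiv A o ⊆ A := by
  induction o using Ordinal.limitRecOn with
  | zero => rw [CBderiv_zero]; exact ⟨hA, subset_rfl⟩
  | add_one o ih =>
      rw [Ordinal.add_one_eq_succ, CBderiv_succ]
      exact ⟨isClosed_derivedSet _,
        ((isClosed_iff_derivedSet_subset _).mp ih.1).trans ih.2⟩
  | limit o ho ih =>
      rw [CBderiv_limit _ ho]
      refine ⟨isClosed_iInter fun b => (ih b.1 b.2).1, ?_⟩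
      exact (Set.iInter_subset _ (⟨0, ho.pos⟩ : { b : Ordinal // b < o })).trans (ih 0 ho.pos).2

lemma CBderiv_succ_subset {A : Set (ℕ → Bool)} (hA : IsClosed A) (o : Ordinal) :
    CBderiv A (Order.succ o) ⊆ CBderiv A o := by
  rw [CBderiv_succ]
  exact (isClosed_iff_derivedSet_subset _).mp (CBderiv_closed_subset hA o).1

lemma szIter_zero {X : Type*} [NormedAddCommGroup X] [NormedSpace ℝ X]
    (ε : ℝ) (K : Set (StrongDual ℝ X)) : szIter ε K 0 = K :=
  Ordinal.limitRecOn_zero ..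

lemma szIter_succ {X : Type*} [NormedAddCommGroup X] [NormedSpace ℝ X]
    (ε : ℝ) (K : Set (StrongDual ℝ X)) (o : Ordinal) :
    szIter ε K (Order.succ o) = szDeriv ε (szIter ε K o) :=
  Ordinal.limitRecOn_succ ..

lemma szIter_limit {X : Type*} [NormedAddCommGroup X] [NormedSpace ℝ X]
    (ε : ℝ) (K : Set (StrongDual ℝ X)) {o : Ordinal} (h : Order.IsSuccLimit o) :
    szIter ε K o = ⋂ b : { b : Ordinal // b < o }, szIter ε K b.1 :=
  Ordinal.limitRecOn_limit _ _ _ _ h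

lemma szIter_subset {X : Type*} [NormedAddCommGroup X] [NormedSpace ℝ X]
    (ε : ℝ) (K : Set (StrongDual ℝ X)) (o : Ordinal) : szIter ε K o ⊆ K := by
  induction o using Ordinal.limitRecOn with
  | zero => rw [szIter_zero]
  | add_one o ih =>
      rw [Ordinal.add_one_eq_succ, szIter_succ]
      exact Set.Subset.trans (fun g hg => hg.1) ih
  | limit o ho ih =>
      rw [szIter_limit _ _ ho]
      exact (Set.iInter_subset _ (⟨0, ho.pos⟩ : { b : Ordinal // b < o })).trans (ih 0 ho.pos)

end Aux

lemma szlenk_key {G : Type*} [NormedAddCommGroup G] [NormedSpace ℝ G]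
    (e : ℕ → G) (f : ℕ → StrongDual ℝ G)
    (he : ∀ k, ‖e k‖ = 1)
    (hbi : ∀ i k : ℕ, f i (e k) = if i = k then 1 else 0)
    (F : ℕ → Set (Finset ℕ)) (hreg : ∀ n, RegularFam (F n))
    (hball : ∀ (n : ℕ) (E : Finset ℕ), E ∈ F n →
      ‖((2 : ℝ) ^ n)⁻¹ • ∑ i ∈ E, f i‖ ≤ 1)
    (hcont : ∀ n : ℕ,
      letI : TopologicalSpace { E : Finset ℕ // E ∈ F n } :=
        TopologicalSpace.induced (fun E => finsetInd E.1) inferInstance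
      Continuous (fun E : { E : Finset ℕ // E ∈ F n } =>
        StrongDual.toWeakDual (((2 : ℝ) ^ n)⁻¹ • ∑ i ∈ E.1, f i))) :
    ∀ (n : ℕ) (μ : Ordinal) (E : Finset ℕ), E ∈ derivFamIter (F n) μ →
        ((2 : ℝ) ^ n)⁻¹ • ∑ i ∈ E, f i ∈
          szIter (((2 : ℝ) ^ (n + 1))⁻¹)
            (Metric.closedBall (0 : StrongDual ℝ G) 1) μ := by
  classical
  have hT2 : ∀ n, IsClosed (famTop (F n)) := fun n => (hreg n).2.2.isClosed
  have happly : ∀ (n : ℕ) (E : Finset ℕ) (k : ℕ),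
      (((2:ℝ)^n)⁻¹ • ∑ i ∈ E, f i) (e k) = if k ∈ E then ((2:ℝ)^n)⁻¹ else 0 := by
    intro n E k
    rw [ContinuousLinearMap.smul_apply, ContinuousLinearMap.sum_apply]
    simp only [hbi]
    rw [Finset.sum_ite_eq' E k (fun _ => (1:ℝ))]
    simp [smul_eq_mul, mul_ite]
  have hsep : ∀ (n : ℕ) (E E' : Finset ℕ), E ≠ E' →
      ((2:ℝ)^n)⁻¹ ≤ ‖(((2:ℝ)^n)⁻¹ • ∑ i ∈ E, f i) - ((2:ℝ)^n)⁻¹ • ∑ i ∈ E', f i‖ := by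
    intro n E E' hnee
    obtain ⟨k, hk⟩ : ∃ k, (k ∈ E ∧ k ∉ E') ∨ (k ∈ E' ∧ k ∉ E) := by
      by_contra hc
      push_neg at hc
      exact hnee (Finset.ext fun k => by have := hc k; tauto)
    have h1 : ‖e k‖ ≤ 1 := le_of_eq (he k)
    have h2 := ContinuousLinearMap.unit_le_opNorm
      ((((2:ℝ)^n)⁻¹ • ∑ i ∈ E, f i) - ((2:ℝ)^n)⁻¹ • ∑ i ∈ E', f i) (e k) h1
    refine le_trans ?_ h2
    rw [ContinuousLinearMap.sub_apply, happly, happly]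
    have hpos : (0:ℝ) < ((2:ℝ)^n)⁻¹ := by positivity
    rcases hk with ⟨h3, h4⟩ | ⟨h3, h4⟩
    · simp only [h3, h4, if_true, if_false, sub_zero, Real.norm_eq_abs]
      rw [abs_of_pos hpos]
    · simp only [h3, h4, if_true, if_false, zero_sub, Real.norm_eq_abs, abs_neg]
      rw [abs_of_pos hpos]
  have key : ∀ (n : ℕ) (μ : Ordinal) (E : Finset ℕ), E ∈ derivFamIter (F n) μ →
      ((2 : ℝ) ^ n)⁻¹ • ∑ i ∈ E, f i ∈
        szIter (((2 : ℝ) ^ (n + 1))⁻¹) (Metric.closedBall (0 : StrongDual ℝ G) 1) μ := by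
    intro n μ
    induction μ using Ordinal.limitRecOn with
    | zero =>
        intro E hE
        simp only [derivFamIter, Set.mem_setOf_eq, CBderiv_zero] at hE
        rw [szIter_zero, Metric.mem_closedBall, dist_zero_right]
        exact hball n E (finsetInd_mem_famTop.mp hE)
    | add_one ν ih =>
        intro E hE
        rw [Ordinal.add_one_eq_succ] at hE ⊢
        simp only [derivFamIter, Set.mem_setOf_eq] at hE
        have hEν : finsetInd E ∈ CBderiv (famTop (F n)) ν :=
          CBderiv_succ_subset (hT2 n) ν hE
        have hEF : E ∈ F n :=
          finsetInd_mem_famTop.mp ((CBderiv_closed_subset (hT2 n) ν).2 hEν)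
        rw [szIter_succ]
        refine ⟨ih E hEν, ?_⟩
        intro U hU hgU
        letI t : TopologicalSpace { E : Finset ℕ // E ∈ F n } :=
          TopologicalSpace.induced (fun E => finsetInd E.1) inferInstance
        have hc := hcont n
        have hpre : IsOpen ((fun E : {E // E ∈ F n} =>
            StrongDual.toWeakDual (((2:ℝ)^n)⁻¹ • ∑ i ∈ E.1, f i)) ⁻¹' U) :=
          hc.isOpen_preimage U hU
        obtain ⟨V, hVopen, hVeq⟩ := isOpen_induced_iff.mp hpre
        have hEV : finsetInd E ∈ V := by
          have hm : (⟨E, hEF⟩ : {E // E ∈ F n}) ∈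
              (fun E : {E // E ∈ F n} => finsetInd E.1) ⁻¹' V := by
            rw [hVeq]; exact hgU
          exact hm
        rw [CBderiv_succ] at hE
        obtain ⟨y, ⟨hyV, hyC⟩, hyne⟩ :=
          accPt_iff_nhds.mp hE V (hVopen.mem_nhds hEV)
        obtain ⟨E', hE'F, rfl⟩ := (CBderiv_closed_subset (hT2 n) ν).2 hyC
        have hE'U : StrongDual.toWeakDual (((2:ℝ)^n)⁻¹ • ∑ i ∈ E', f i) ∈ U := by
          have hm : (⟨E', hE'F⟩ : {E // E ∈ F n}) ∈
              (fun E : {E // E ∈ F n} => finsetInd E.1) ⁻¹' V := hyV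
          rw [hVeq] at hm; exact hm
        set S := { g : StrongDual ℝ G |
          g ∈ szIter (((2:ℝ)^(n+1))⁻¹) (Metric.closedBall (0 : StrongDual ℝ G) 1) ν ∧
            StrongDual.toWeakDual g ∈ U } with hS
        have hSb : Bornology.IsBounded S :=
          (Metric.isBounded_closedBall (x := (0 : StrongDual ℝ G)) (r := 1)).subset
            (fun g hg => szIter_subset _ _ _ hg.1)
        have hmem1 : (((2:ℝ)^n)⁻¹ • ∑ i ∈ E, f i) ∈ S := ⟨ih E hEν, hgU⟩
        have hmem2 : (((2:ℝ)^n)⁻¹ • ∑ i ∈ E', f i) ∈ S := ⟨ih E' hyC, hE'U⟩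
        have hd := Metric.dist_le_diam_of_mem hSb hmem1 hmem2
        have hdist : ((2:ℝ)^n)⁻¹ ≤
            dist (((2:ℝ)^n)⁻¹ • ∑ i ∈ E, f i) (((2:ℝ)^n)⁻¹ • ∑ i ∈ E', f i) := by
          rw [dist_eq_norm]
          exact hsep n E E' (fun h => hyne (congrArg finsetInd h.symm))
        have hε : ((2:ℝ)^(n+1))⁻¹ ≤ ((2:ℝ)^n)⁻¹ := by
          have h2n : (2:ℝ)^n ≤ (2:ℝ)^(n+1) := by
            apply pow_le_pow_right₀ <;> norm_num
          have := inv_anti₀ (by positivity) h2n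
          exact this
        exact hε.trans (hdist.trans hd)
    | limit ν hν ih =>
        intro E hE
        simp only [derivFamIter, Set.mem_setOf_eq, CBderiv_limit _ hν] at hE
        rw [szIter_limit _ _ hν, Set.mem_iInter]
        rw [Set.mem_iInter] at hE
        exact fun b => ih b.1 b.2 E (hE b)
  exact key

/-- Lower Szlenk estimate for the space `G` built from regular families `𝓕ₙ`: with
biorthogonal systems `(e_k, f_i)` (so `‖e_k‖ = 1`, `f i (e k) = δ_{ik}`), and each
`2⁻ⁿ ∑_{i ∈ E} f i`, `E ∈ 𝓕ₙ`, in the dual ball (weak*-continuously in `E`), every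
`E ∈ 𝓕ₙ^{(μ)}` yields `2⁻ⁿ ∑_{i ∈ E} f i ∈ s_{2^{-n-1}}^μ(B_{G*})`. Consequently, if
`CB(𝓕ₙ) = ω^{ω^ζ n} + 1` for all `n`, then `Sz(G) ≥ ω^{ω^ζ n}` for every `n`, and hence
`Sz(G) ≥ ω^{ω^{ζ+1}}` (the Szlenk derivations below these ordinals are nonempty). -/
theorem szlenk_lower_bound {G : Type*} [NormedAddCommGroup G] [NormedSpace ℝ G]
    [CompleteSpace G]
    (e : ℕ → G) (f : ℕ → StrongDual ℝ G)
    (he : ∀ k, ‖e k‖ = 1)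
    (hbi : ∀ i k : ℕ, f i (e k) = if i = k then 1 else 0)
    (F : ℕ → Set (Finset ℕ)) (hreg : ∀ n, RegularFam (F n))
    (hball : ∀ (n : ℕ) (E : Finset ℕ), E ∈ F n →
      ‖((2 : ℝ) ^ n)⁻¹ • ∑ i ∈ E, f i‖ ≤ 1)
    (hcont : ∀ n : ℕ,
      letI : TopologicalSpace { E : Finset ℕ // E ∈ F n } :=
        TopologicalSpace.induced (fun E => finsetInd E.1) inferInstance
      Continuous (fun E : { E : Finset ℕ // E ∈ F n } =>
        StrongDual.toWeakDual (((2 : ℝ) ^ n)⁻¹ • ∑ i ∈ E.1, f i))) :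
    (∀ (n : ℕ) (μ : Ordinal) (E : Finset ℕ), E ∈ derivFamIter (F n) μ →
        ((2 : ℝ) ^ n)⁻¹ • ∑ i ∈ E, f i ∈
          szIter (((2 : ℝ) ^ (n + 1))⁻¹)
            (Metric.closedBall (0 : StrongDual ℝ G) 1) μ) ∧
    ∀ ζ : Ordinal,
      (∀ n : ℕ, CBfam (F n) = Ordinal.omega0 ^ (Ordinal.omega0 ^ ζ * n) + 1) →
      (∀ n : ℕ, ∀ o < Ordinal.omega0 ^ (Ordinal.omega0 ^ ζ * n),
        szIter (((2 : ℝ) ^ (n + 1))⁻¹)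
          (Metric.closedBall (0 : StrongDual ℝ G) 1) o ≠ ∅) ∧
      ∀ o < Ordinal.omega0 ^ (Ordinal.omega0 ^ (ζ + 1)), ∃ ε > (0 : ℝ),
        szIter ε (Metric.closedBall (0 : StrongDual ℝ G) 1) o ≠ ∅ := by
  classical
  have hT2 : ∀ n, IsClosed (famTop (F n)) := fun n => (hreg n).2.2.isClosed
  refine ⟨szlenk_key e f he hbi F hreg hball hcont, ?_⟩
  intro ζ hCB
  have main : ∀ (n : ℕ), ∀ o < Ordinal.omega0 ^ (Ordinal.omega0 ^ ζ * n),
      szIter (((2:ℝ)^(n+1))⁻¹) (Metric.closedBall (0 : StrongDual ℝ G) 1) o ≠ ∅ := by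
    intro n o ho
    have hne : CBderiv (famTop (F n)) o ≠ ∅ := by
      intro h
      have h2 : CBfam (F n) ≤ o := csInf_le' h
      rw [hCB n] at h2
      exact absurd ((ho.trans_le le_self_add).trans_le h2) (lt_irrefl o)
    obtain ⟨y, hy⟩ := Set.nonempty_iff_ne_empty.mpr hne
    obtain ⟨E, hEF, rfl⟩ := (CBderiv_closed_subset (hT2 n) o).2 hy
    exact Set.nonempty_iff_ne_empty.mp ⟨_, szlenk_key e f he hbi F hreg hball hcont n o E hy⟩
  refine ⟨main, ?_⟩
  intro o ho
  have hlim : Order.IsSuccLimit (Ordinal.omega0 ^ ζ * Ordinal.omega0) :=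
    Ordinal.isSuccLimit_mul_right (Ordinal.opow_pos ζ Ordinal.omega0_pos) Ordinal.isSuccLimit_omega0
  rw [Ordinal.opow_add, Ordinal.opow_one] at ho
  have h1 : ¬ (Ordinal.omega0 ^ (Ordinal.omega0 ^ ζ * Ordinal.omega0) ≤ o) := not_le.mpr ho
  rw [Ordinal.opow_le_of_isSuccLimit Ordinal.omega0_ne_zero hlim] at h1
  push_neg at h1
  obtain ⟨b, hb, hob⟩ := h1
  obtain ⟨c, hc, hbc⟩ := (Ordinal.lt_mul_iff_of_isSuccLimit Ordinal.isSuccLimit_omega0).mp hb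
  obtain ⟨m, rfl⟩ := Ordinal.lt_omega0.mp hc
  have hom : o < Ordinal.omega0 ^ (Ordinal.omega0 ^ ζ * m) :=
    hob.trans_le (Ordinal.opow_le_opow_right Ordinal.omega0_pos hbc.le)
  exact ⟨((2:ℝ)^(m+1))⁻¹, by positivity, main m o hom⟩
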